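/- Let p be a prime and δ a positive integer, and let L be a sublattice of index p in the lattice Zⁿ⁻¹ ⊕ Z(δ) (the orthogonal sum of the standard rank n−1 lattice and a rank one lattice with a generator of square δ). Then either L is isomorphic to Zⁿ⁻¹ ⊕ Z(p²δ), or L admits a characteristic covector ξ with ξ² < n − 1. -/

import Mathlib

open Matrix

def IsCharVec {n : ℕ} (Q : Matrix (Fin n) (Fin n) ℤ) (ξ : Fin n → ℤ) : Prop :=
  ∀ y : Fin n → ℤ, ξ ⬝ᵥ y ≡ y ⬝ᵥ Q.mulVec y [ZMOD 2]

noncomputable def charSq {n : ℕ} (Q : Matrix (Fin n) (Fin n) ℤ) (ξ : Fin n → ℤ) : ℚ :=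
  (fun i => (ξ i : ℚ)) ⬝ᵥ ((Q.map (Int.cast : ℤ → ℚ))⁻¹).mulVec (fun i => (ξ i : ℚ))


/-- reduce M into [-p, p) modulo 2p -/
def redR (p M : ℤ) : ℤ := (M + p) % (2*p) - p

lemma redR_modeq (p M : ℤ) : redR p M ≡ M [ZMOD 2*p] := by
  have h : (M + p) % (2*p) ≡ M + p [ZMOD 2*p] :=
    Int.emod_emod_of_dvd _ dvd_rfl
  have := h.sub (Int.ModEq.refl p)
  simpa [redR] using this

lemma redR_mem {p : ℤ} (hp : 0 < p) (M : ℤ) : -p ≤ redR p M ∧ redR p M < p := by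
  unfold redR
  have h2p : (0:ℤ) < 2*p := by omega
  have h1 := Int.emod_nonneg (M + p) (by omega : (2*p:ℤ) ≠ 0)
  have h2 := Int.emod_lt_of_pos (M + p) h2p
  omega

lemma redR_eq_of {p : ℤ} (hp : 0 < p) {M a : ℤ} (h : M ≡ a [ZMOD 2*p])
    (h1 : -p ≤ a) (h2 : a < p) : redR p M = a := by
  have hm := redR_modeq p M
  have hmem := redR_mem hp M
  have hd : (2*p) ∣ (redR p M - a) := Int.ModEq.dvd (hm.trans h).symm
  have h0 : redR p M - a = 0 := Int.eq_zero_of_abs_lt_dvd hd (by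
    rw [abs_lt]; omega)
  omega

lemma solve_cong {p : ℕ} (hp : p.Prime) {c : ℤ} (hc : ¬ (p:ℤ) ∣ c) (t : ℤ) :
    ∃ k : ℤ, (p:ℤ) ∣ (k * c - t) := by
  haveI := Fact.mk hp
  refine ⟨((t : ZMod p) * (c : ZMod p)⁻¹).val, ?_⟩
  have hc0 : (c : ZMod p) ≠ 0 := by
    rwa [Ne, ZMod.intCast_zmod_eq_zero_iff_dvd]
  have key : (((((t : ZMod p) * (c : ZMod p)⁻¹).val : ℤ) * c - t : ℤ) : ZMod p) = 0 := by
    push_cast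
    rw [ZMod.natCast_val, ZMod.cast_id]
    field_simp
    simp
  exact (ZMod.intCast_zmod_eq_zero_iff_dvd _ p).mp key


lemma adj_not_all_dvd {n p : ℕ} (hn : 1 ≤ n) (hp : p.Prime)
    {B : Matrix (Fin n) (Fin n) ℤ} (hB : |B.det| = (p:ℤ)) :
    ¬ ∀ i j, (p:ℤ) ∣ (Bᵀ).adjugate i j := by
  intro h
  set C := (Bᵀ).adjugate with hC
  have hC0 : C = (p:ℤ) • (Matrix.of fun i j => C i j / p) := by
    ext i j
    exact (Int.mul_ediv_cancel' (h i j)).symm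
  have hdet : C.det = ((p:ℤ))^n * (Matrix.of fun i j => C i j / (p:ℤ)).det := by
    conv_lhs => rw [hC0]
    rw [Matrix.det_smul]; simp
  have hdet2 : C.det = (Bᵀ).det ^ (n - 1) := by
    rw [hC]; rw [Matrix.det_adjugate]; simp
  have habs : |C.det| = (p:ℤ)^(n-1) := by
    rw [hdet2, abs_pow, Matrix.det_transpose, hB]
  have hdvd : ((p:ℤ))^n ∣ C.det := ⟨_, hdet⟩
  have hdvd2 : ((p:ℤ))^n ∣ (p:ℤ)^(n-1) := ((dvd_abs _ _).mpr hdvd).trans (by rw [habs])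
  have hple : n ≤ n - 1 := by
    refine (pow_dvd_pow_iff ?_ ?_).mp hdvd2
    · exact_mod_cast hp.pos.ne'
    · rw [Int.isUnit_iff]
      have := hp.one_lt
      omega
  omega


lemma row_dvd_of_adj {n p : ℕ} (hp : p.Prime)
    {B : Matrix (Fin n) (Fin n) ℤ} (hB : |B.det| = (p:ℤ))
    {i₀ : Fin n} {j' : Fin n}
    (hw : ¬ (p:ℤ) ∣ (Bᵀ).adjugate i₀ j')
    (hA : ∀ j k, k ≠ i₀ → (p:ℤ) ∣ (Bᵀ).adjugate k j) :
    ∀ j, (p:ℤ) ∣ B i₀ j := by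
  intro j
  set C := (Bᵀ).adjugate with hC
  have hmul : (Bᵀ * C) j j' = B.det * (if j = j' then 1 else 0) := by
    rw [Matrix.mul_adjugate, Matrix.det_transpose]
    simp [Matrix.smul_apply, Matrix.one_apply]
  have hsum : ∑ k, B k j * C k j' = B.det * (if j = j' then 1 else 0) := by
    rw [← hmul, Matrix.mul_apply]
    simp [Matrix.transpose_apply]
  have hdB : (p:ℤ) ∣ B.det := by
    rcases abs_eq (by positivity : (0:ℤ) ≤ p) |>.mp hB with h | h
    · exact ⟨1, by omega⟩
    · exact ⟨-1, by omega⟩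
  have hrest : (p:ℤ) ∣ ∑ k ∈ Finset.univ.erase i₀, B k j * C k j' :=
    Finset.dvd_sum fun k hk => Dvd.dvd.mul_left (hA j' k (Finset.mem_erase.mp hk).1) _
  have hsplit : ∑ k, B k j * C k j' =
      B i₀ j * C i₀ j' + ∑ k ∈ Finset.univ.erase i₀, B k j * C k j' := by
    rw [← Finset.add_sum_erase _ _ (Finset.mem_univ i₀)]
  have hdvd : (p:ℤ) ∣ B i₀ j * C i₀ j' := by
    have h1 : (p:ℤ) ∣ ∑ k, B k j * C k j' := hsum ▸ hdB.mul_right _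
    rw [hsplit] at h1
    exact (Int.dvd_add_right hrest).mp (by rwa [add_comm] at h1)
  rcases (Int.Prime.dvd_mul' (by exact_mod_cast hp) hdvd) with h | h
  · exact h
  · exact absurd h hw

lemma perm_mul_transpose {n : ℕ} (σ : Equiv.Perm (Fin n)) :
    (Matrix.of fun i j : Fin n => if i = σ j then (1:ℤ) else 0) *
      (Matrix.of fun i j : Fin n => if i = σ j then (1:ℤ) else 0)ᵀ = 1 := by
  ext i j
  simp only [Matrix.mul_apply, Matrix.transpose_apply, Matrix.of_apply, Matrix.one_apply]
  rw [Finset.sum_eq_single (σ.symm i)]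
  · by_cases h : i = j
    · subst h; simp
    · have : ¬ (j = σ (σ.symm i)) := by simp [eq_comm]; intro hh; exact h (by simp [← hh])
      simp [this, h, Ne.symm h]
  · intro k _ hk
    have : ¬ (i = σ k) := fun hh => hk (by simp [hh])
    simp [this]
  · simp

lemma perm_conj_diag {n : ℕ} (σ : Equiv.Perm (Fin n)) (g : Fin n → ℤ) :
    (Matrix.of fun i j : Fin n => if i = σ j then (1:ℤ) else 0)ᵀ * diagonal g *
      (Matrix.of fun i j : Fin n => if i = σ j then (1:ℤ) else 0) = diagonal (fun i => g (σ i)) := by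
  ext i j
  simp only [Matrix.mul_apply, Matrix.transpose_apply, Matrix.of_apply, Matrix.diagonal_apply]
  simp only [mul_ite, ite_mul, one_mul, zero_mul, mul_zero, mul_one, Finset.sum_ite_eq,
    Finset.sum_ite_eq', Finset.mem_univ, if_true]
  by_cases h : i = j
  · subst h; simp
  · have h2 : ¬ (σ j = σ i) := fun hh => h (σ.injective hh.symm)
    simp [h, h2]

lemma first_disj {n p δ : ℕ} (hn : 1 ≤ n) (hp : 0 < p)
    (B : Matrix (Fin n) (Fin n) ℤ) (hB : |B.det| = (p:ℤ))
    (i₀ : Fin n) (hcase : δ = 1 ∨ (i₀:ℕ) = n - 1)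
    (hdvd : ∀ j, (p:ℤ) ∣ B i₀ j) :
    ∃ U : Matrix (Fin n) (Fin n) ℤ, IsUnit U.det ∧
      Uᵀ * (Bᵀ * diagonal (fun i : Fin n => if (i:ℕ) = n-1 then (δ:ℤ) else 1) * B) * U
        = diagonal (fun i : Fin n => if (i:ℕ) = n-1 then ((p:ℤ)^2*δ) else 1) := by
  set d : Fin n → ℤ := fun i => if (i:ℕ) = n-1 then (δ:ℤ) else 1 with hd
  set last : Fin n := ⟨n-1, by omega⟩ with hlast
  set P : Matrix (Fin n) (Fin n) ℤ := diagonal (fun i => if i = i₀ then (p:ℤ) else 1) with hP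
  set V : Matrix (Fin n) (Fin n) ℤ := Matrix.of fun i j => if i = i₀ then B i j / p else B i j with hV
  have hPV : P * V = B := by
    ext i j
    rw [hP, Matrix.diagonal_mul]
    by_cases h : i = i₀
    · subst h; simp [hV, Int.mul_ediv_cancel' (hdvd j)]
    · simp [hV, h]
  have hdetP : P.det = (p:ℤ) := by
    rw [hP, Matrix.det_diagonal,
      Finset.prod_eq_single i₀ (fun b _ hb => if_neg hb)
        (fun h => absurd (Finset.mem_univ i₀) h)]
    simp
  have hdetB : B.det = (p:ℤ) * V.det := by rw [← hPV, Matrix.det_mul, hdetP]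
  have hdetV : V.det * V.det = 1 := by
    have h1 : |V.det| = 1 := by
      have : (p:ℤ) * |V.det| = (p:ℤ) * 1 := by
        rw [mul_one, ← abs_of_nonneg (by positivity : (0:ℤ) ≤ (p:ℤ)), ← abs_mul, ← hdetB, hB,
          abs_of_nonneg (by positivity : (0:ℤ) ≤ (p:ℤ))]
      exact mul_left_cancel₀ (by exact_mod_cast hp.ne' : (p:ℤ) ≠ 0) this
    rcases abs_eq (by norm_num : (0:ℤ) ≤ 1) |>.mp h1 with h | h <;> rw [h] <;> ring
  set W : Matrix (Fin n) (Fin n) ℤ := V.det • V.adjugate with hW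
  have hVW : V * W = 1 := by
    rw [hW, Matrix.mul_smul, Matrix.mul_adjugate, smul_smul, hdetV, one_smul]
  have hBW : B * W = P := by
    rw [← hPV, Matrix.mul_assoc, hVW, Matrix.mul_one]
  set σ : Equiv.Perm (Fin n) := Equiv.swap i₀ last with hσ
  set E : Matrix (Fin n) (Fin n) ℤ := Matrix.of fun i j => if i = σ j then (1:ℤ) else 0 with hE
  refine ⟨W * E, ?_, ?_⟩
  · rw [Matrix.det_mul]
    refine IsUnit.mul ?_ ?_
    · exact IsUnit.of_mul_eq_one V.det (by
        rw [mul_comm, ← Matrix.det_mul, hVW, Matrix.det_one])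
    · exact IsUnit.of_mul_eq_one Eᵀ.det (by
        rw [← Matrix.det_mul, perm_mul_transpose, Matrix.det_one])
  · have key : (W * E)ᵀ * (Bᵀ * diagonal d * B) * (W * E)
        = Eᵀ * ((B*W)ᵀ * diagonal d * (B*W)) * E := by
      simp only [Matrix.transpose_mul]
      noncomm_ring
    rw [key, hBW]
    have hPt : Pᵀ = P := Matrix.diagonal_transpose _
    have hPGP : Pᵀ * diagonal d * P =
        diagonal (fun i => (if i = i₀ then (p:ℤ) else 1) * d i * (if i = i₀ then (p:ℤ) else 1)) := by
      rw [hPt, hP, Matrix.diagonal_mul_diagonal, Matrix.diagonal_mul_diagonal]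
    rw [hPGP, perm_conj_diag]
    refine congrArg diagonal (funext fun i => ?_)
    have hlastv : (last:ℕ) = n - 1 := rfl
    rcases hcase with h1 | h1
    · -- δ = 1
      subst h1
      have hd1 : ∀ k, d k = 1 := by intro k; simp [hd]
      by_cases h : i = last
      · subst h
        have hσl : σ last = i₀ := Equiv.swap_apply_right _ _
        rw [hσl, if_pos rfl, if_pos rfl, hd1]
        push_cast; ring
      · have hne : ¬ (i:ℕ) = n - 1 := fun hh => h (Fin.ext hh)
        have hσne : σ i ≠ i₀ := by
          intro hh
          apply h
          have : i = σ i₀ := by rw [← σ.symm_apply_apply i, hh]; simp [hσ]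
          rw [this, hσ, Equiv.swap_apply_left]
        rw [if_neg hσne, if_neg hne, hd1]
        ring
    · -- i₀ = last
      have hi0 : i₀ = last := Fin.ext (by rw [h1])
      subst hi0
      have hσr : σ i = i := by simp [hσ]
      rw [hσr]
      by_cases h : i = last
      · subst h
        have hdl : d last = (δ:ℤ) := by simp [hd, hlastv]
        rw [if_pos rfl, if_pos rfl, hdl]
        ring
      · have hne : ¬ (i:ℕ) = n - 1 := fun hh => h (Fin.ext hh)
        have hdi : d i = 1 := by simp [hd, hne]
        rw [if_neg h, if_neg hne, hdi]
        ring

lemma key_char {n p δ : ℕ} (hp : 0 < p) (hδ : 0 < δ)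
    (B : Matrix (Fin n) (Fin n) ℤ) (hB : |B.det| = (p:ℤ))
    (d : Fin n → ℤ) (hdpos : ∀ i, 0 < d i)
    (k k' : ℤ) (j₀ j₁ : Fin n) :
    ∃ ξ : Fin n → ℤ,
      IsCharVec (Bᵀ * diagonal d * B) ξ ∧
      charSq (Bᵀ * diagonal d * B) ξ =
        ∑ i, (redR p ((p:ℤ) * d i + 2*(k * (Bᵀ).adjugate i j₀ + k' * (Bᵀ).adjugate i j₁)) : ℚ)^2
          / ((p:ℚ)^2 * (d i : ℚ)) := by
  have hpz : ((p:ℤ)) ≠ 0 := by exact_mod_cast hp.ne'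
  have hpq : ((p:ℚ)) ≠ 0 := by exact_mod_cast hp.ne'
  set C := (Bᵀ).adjugate with hC
  set M : Fin n → ℤ := fun i => (p:ℤ) * d i + 2*(k * C i j₀ + k' * C i j₁) with hM
  set r : Fin n → ℤ := fun i => redR p (M i) with hr
  set w : Fin n → ℤ := fun i => -((M i + p) / (2*p)) with hw
  have hrw : ∀ i, r i = M i + 2*(p:ℤ)*(w i) := by
    intro i
    simp only [hr, hw, redR, Int.emod_def]
    ring
  -- determinant sign
  have hdet : B.det = (p:ℤ) ∨ B.det = -(p:ℤ) := abs_eq (by positivity) |>.mp hB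
  set ε : ℤ := if B.det = (p:ℤ) then 1 else -1 with hε
  have hεdet : B.det = ε * p := by
    rcases hdet with h | h
    · rw [hε, if_pos h, one_mul]; exact h
    · rw [hε, if_neg (by rw [h]; intro hh; omega)]; omega
  set m : Fin n → ℤ := fun l =>
    ε * k * (if l = j₀ then 1 else 0) + ε * k' * (if l = j₁ then 1 else 0) + (Bᵀ *ᵥ w) l with hm
  set ξ : Fin n → ℤ := fun l => (Bᵀ *ᵥ d) l + 2 * m l with hξ
  -- the main linear algebra identity
  have hBC : ∀ j l, (∑ i, Bᵀ l i * C i j) = B.det * (if l = j then 1 else 0) := by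
    intro j l
    have h0 : (∑ i, Bᵀ l i * C i j) = (Bᵀ * C) l j := (Matrix.mul_apply).symm
    rw [h0, hC, Matrix.mul_adjugate, Matrix.det_transpose, Matrix.smul_apply,
      Matrix.one_apply, smul_eq_mul]
  have claim1 : ∀ l, (Bᵀ *ᵥ r) l = (p:ℤ) * ξ l := by
    intro l
    have expand : (Bᵀ *ᵥ r) l
        = (p:ℤ) * (Bᵀ *ᵥ d) l + 2*k*(∑ i, Bᵀ l i * C i j₀) + 2*k'*(∑ i, Bᵀ l i * C i j₁)
          + 2*(p:ℤ)*(Bᵀ *ᵥ w) l := by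
      simp only [Matrix.mulVec, dotProduct, hM, Finset.mul_sum]
      rw [← Finset.sum_add_distrib, ← Finset.sum_add_distrib, ← Finset.sum_add_distrib]
      apply Finset.sum_congr rfl
      intro i _
      rw [hrw i]
      simp only [hM]
      ring
    rw [expand, hBC, hBC, hξ, hm, hεdet]
    ring
  refine ⟨ξ, ?_, ?_⟩
  · -- characteristic
    intro y
    set u : Fin n → ℤ := B *ᵥ y with hu
    have hL : ξ ⬝ᵥ y = d ⬝ᵥ u + 2 * (m ⬝ᵥ y) := by
      have h1 : (Bᵀ *ᵥ d) ⬝ᵥ y = d ⬝ᵥ u := by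
        rw [Matrix.mulVec_transpose, ← Matrix.dotProduct_mulVec, hu]
      calc ξ ⬝ᵥ y = ∑ i, ((Bᵀ *ᵥ d) i * y i + 2 * (m i * y i)) := by
            simp only [hξ, dotProduct]
            exact Finset.sum_congr rfl fun i _ => by ring
        _ = (Bᵀ *ᵥ d) ⬝ᵥ y + 2 * (m ⬝ᵥ y) := by
            rw [Finset.sum_add_distrib, ← Finset.mul_sum]
            rfl
        _ = d ⬝ᵥ u + 2 * (m ⬝ᵥ y) := by rw [h1]
    have hR : y ⬝ᵥ (Bᵀ * diagonal d * B) *ᵥ y = ∑ i, d i * u i * u i := by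
      rw [← Matrix.mulVec_mulVec, ← Matrix.mulVec_mulVec, Matrix.dotProduct_mulVec,
        Matrix.vecMul_transpose]
      simp only [dotProduct, Matrix.mulVec_diagonal, hu]
      apply Finset.sum_congr rfl
      intro i _
      ring
    rw [hL, hR, Int.ModEq]
    have hdvd : (2:ℤ) ∣ ((∑ i, d i * u i * u i) - (d ⬝ᵥ u + 2 * (m ⬝ᵥ y))) := by
      have e1 : (∑ i, d i * u i * u i) - (∑ i, d i * u i) = ∑ i, d i * (u i * (u i - 1)) := by
        rw [← Finset.sum_sub_distrib]
        exact Finset.sum_congr rfl fun i _ => by ring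
      have e2 : (∑ i, d i * u i * u i) - (d ⬝ᵥ u + 2 * (m ⬝ᵥ y))
          = (∑ i, d i * (u i * (u i - 1))) - 2 * (m ⬝ᵥ y) := by
        have hdot : d ⬝ᵥ u = ∑ i, d i * u i := rfl
        rw [hdot, ← e1]
        ring
      rw [e2]
      refine dvd_sub (Finset.dvd_sum fun i _ => ?_) ⟨m ⬝ᵥ y, rfl⟩
      have hev : Even (u i * (u i - 1)) := by
        have h := Int.even_mul_succ_self (u i - 1)
        rwa [sub_add_cancel, mul_comm] at h
      exact Dvd.dvd.mul_left hev.two_dvd _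
    omega
  · -- charSq value
    set A : Matrix (Fin n) (Fin n) ℚ := B.map (Int.cast : ℤ → ℚ) with hA
    have hmapdet : A.det = (B.det : ℚ) := by
      rw [hA]
      exact (RingHom.map_det (Int.castRingHom ℚ) B).symm
    have hBdet0 : B.det ≠ 0 := by
      intro h
      rw [h] at hB
      simp at hB
      omega
    have hAdet : IsUnit A.det := by
      rw [hmapdet]
      exact isUnit_iff_ne_zero.mpr (by exact_mod_cast hBdet0)
    have hATdet : IsUnit (Aᵀ).det := by rw [Matrix.det_transpose]; exact hAdet
    set dq : Fin n → ℚ := fun i => (d i : ℚ) with hdq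
    have hdq0 : ∀ i, dq i ≠ 0 := fun i => by
      have := hdpos i
      simp only [hdq]
      exact_mod_cast this.ne'
    have hQmap : (Bᵀ * diagonal d * B).map (Int.cast : ℤ → ℚ) = Aᵀ * diagonal dq * A := by
      rw [show ((Int.cast : ℤ → ℚ)) = ⇑(Int.castRingHom ℚ) from rfl, Matrix.map_mul,
        Matrix.map_mul, Matrix.transpose_map, Matrix.diagonal_map (by simp)]
      rfl
    have hGinv : (diagonal dq)⁻¹ = diagonal (fun i => (dq i)⁻¹) := by
      apply Matrix.inv_eq_right_inv
      rw [Matrix.diagonal_mul_diagonal]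
      have : (fun i => dq i * (dq i)⁻¹) = fun _ => (1:ℚ) := by
        funext i; exact mul_inv_cancel₀ (hdq0 i)
      rw [this, Matrix.diagonal_one]
    have hQinv : ((Bᵀ * diagonal d * B).map (Int.cast : ℤ → ℚ))⁻¹
        = A⁻¹ * (diagonal (fun i => (dq i)⁻¹) * (Aᵀ)⁻¹) := by
      rw [hQmap, Matrix.mul_inv_rev, Matrix.mul_inv_rev, hGinv]
    set η : Fin n → ℚ := fun i => (r i : ℚ) / p with hη
    have hAtη : Aᵀ *ᵥ η = fun l => (ξ l : ℚ) := by
      funext l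
      have h1 : (Aᵀ *ᵥ η) l = (∑ i, ((Bᵀ l i * r i : ℤ) : ℚ)) / p := by
        simp only [Matrix.mulVec, dotProduct, Matrix.transpose_apply, hA, Matrix.map_apply, hη]
        rw [Finset.sum_div]
        exact Finset.sum_congr rfl fun i _ => by push_cast; ring
      have h2 : (Bᵀ *ᵥ r) l = (p:ℤ) * ξ l := claim1 l
      have h3 : (∑ i, Bᵀ l i * r i) = (p:ℤ) * ξ l := h2
      rw [h1, show (∑ i, ((Bᵀ l i * r i : ℤ) : ℚ)) = (((∑ i, Bᵀ l i * r i : ℤ)) : ℚ) by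
        push_cast; rfl, h3]
      push_cast
      field_simp
    show (fun i => (ξ i : ℚ)) ⬝ᵥ ((Bᵀ * diagonal d * B).map (Int.cast : ℤ → ℚ))⁻¹ *ᵥ
        (fun i => (ξ i : ℚ)) = _
    rw [hQinv, ← hAtη]
    rw [Matrix.mulVec_mulVec, Matrix.mul_assoc A⁻¹,
      Matrix.mul_assoc (diagonal fun i => (dq i)⁻¹),
      Matrix.nonsing_inv_mul _ hATdet, Matrix.mul_one]
    rw [Matrix.mulVec_transpose, Matrix.dotProduct_mulVec, Matrix.vecMul_vecMul,
      ← Matrix.mul_assoc, Matrix.mul_nonsing_inv _ hAdet, Matrix.one_mul]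
    have hfin : ∀ x, (η ᵥ* diagonal (fun i => (dq i)⁻¹)) x = η x * (dq x)⁻¹ :=
      fun x => Matrix.vecMul_diagonal _ _ _
    show (∑ x, (η ᵥ* diagonal (fun i => (dq i)⁻¹)) x * η x) = _
    apply Finset.sum_congr rfl
    intro i _
    rw [hfin i, hη, hdq]
    have hd0 : ((d i : ℚ)) ≠ 0 := hdq0 i
    field_simp
    ring

lemma sum_bound {n p : ℕ} (hp : 0 < p) {d : Fin n → ℤ} (hdpos : ∀ i, 0 < d i)
    (r : Fin n → ℤ) (hr : ∀ i, -(p:ℤ) ≤ r i ∧ r i < p)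
    {i₀ i₁ : Fin n} (hne : i₀ ≠ i₁) {a b : ℚ}
    (h₀ : (r i₀ : ℚ)^2 / ((p:ℚ)^2 * (d i₀ : ℚ)) ≤ a)
    (h₁ : (r i₁ : ℚ)^2 / ((p:ℚ)^2 * (d i₁ : ℚ)) ≤ b) :
    ∑ i, (r i : ℚ)^2 / ((p:ℚ)^2 * (d i : ℚ)) ≤ ((n:ℚ) - 2) + a + b := by
  set f : Fin n → ℚ := fun i => (r i : ℚ)^2 / ((p:ℚ)^2 * (d i : ℚ)) with hf
  have hn2 : 2 ≤ n := by
    have h := Fintype.one_lt_card_iff_nontrivial.mpr ⟨i₀, i₁, hne⟩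
    simp at h; omega
  have hone : ∀ i, f i ≤ 1 := by
    intro i
    have hrsq : (r i : ℚ)^2 ≤ (p:ℚ)^2 := by
      have h := hr i
      have : (r i)^2 ≤ ((p:ℤ))^2 := sq_le_sq' (by omega) (by omega)
      exact_mod_cast this
    have hd1 : (1:ℚ) ≤ (d i : ℚ) := by exact_mod_cast hdpos i
    have hp2 : (0:ℚ) < (p:ℚ)^2 := by positivity
    rw [div_le_one (by positivity)]
    calc (r i : ℚ)^2 ≤ (p:ℚ)^2 := hrsq
      _ = (p:ℚ)^2 * 1 := by ring
      _ ≤ (p:ℚ)^2 * (d i : ℚ) := by nlinarith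
  have hsplit : ∑ i, f i = (∑ i ∈ Finset.univ \ {i₀, i₁}, f i) + (f i₀ + f i₁) := by
    rw [← Finset.sum_pair hne]
    rw [Finset.sum_sdiff (Finset.subset_univ _)]
  have hcard : (Finset.univ \ ({i₀, i₁} : Finset (Fin n))).card = n - 2 := by
    rw [Finset.card_sdiff_of_subset (Finset.subset_univ _), Finset.card_univ, Fintype.card_fin,
      Finset.card_pair hne]
  have hrest : ∑ i ∈ Finset.univ \ {i₀, i₁}, f i ≤ ((n:ℚ) - 2) := by
    calc ∑ i ∈ Finset.univ \ {i₀, i₁}, f i ≤ (Finset.univ \ ({i₀, i₁} : Finset (Fin n))).card • (1:ℚ) :=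
          Finset.sum_le_card_nsmul _ _ _ (fun i _ => hone i)
      _ = ((n - 2 : ℕ) : ℚ) := by rw [hcard]; simp
      _ = ((n:ℚ) - 2) := by
          have : ((n - 2 : ℕ) : ℚ) = (n:ℚ) - 2 := by
            have := hn2
            push_cast [Nat.cast_sub hn2]
            ring
          exact this
  rw [hsplit]
  linarith

lemma second_bound {p : ℕ} (hp : p.Prime) {c₀ c₁ k u ρ : ℤ}
    (hρu : ρ - (p:ℤ) = 2*u) (hρ : ρ = 0 ∨ ρ = 1)
    (hc₀ : ¬ (p:ℤ) ∣ c₀) (hc₁ : ¬ (p:ℤ) ∣ c₁)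
    (hk : (p:ℤ) ∣ k*c₀ - u) :
    (redR p ((p:ℤ) + 2*(k*c₁)))^2 ≤ ((p:ℤ) - 2)^2 := by
  have hp1 : 1 < p := hp.one_lt
  have hppos : (0:ℤ) < p := by exact_mod_cast hp.pos
  set M : ℤ := (p:ℤ) + 2*(k*c₁) with hM
  have hmem := redR_mem hppos M
  have hmod : redR (p:ℤ) M ≡ M [ZMOD 2*(p:ℤ)] := redR_modeq _ _
  rcases hp.eq_two_or_odd' with h2 | hodd
  · subst h2
    have hρ0 : ρ = 0 := by rcases hρ with h | h; exacts [h, by omega]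
    have hu : u = -1 := by push_cast at hρu; omega
    have hkodd : ¬ (2:ℤ) ∣ k := by
      intro hdk
      rcases hdk with ⟨t, ht⟩
      have h1 : (2:ℤ) ∣ 2*(t*c₀) := ⟨t*c₀, rfl⟩
      have h2 : k * c₀ - u = 2*(t*c₀) + 1 := by rw [ht, hu]; ring
      rw [h2] at hk
      have h3 := hk.sub h1
      simp at h3
    have hc₁odd : ¬ (2:ℤ) ∣ c₁ := by exact_mod_cast hc₁
    have h4 : (4:ℤ) ∣ M := by
      rcases Int.even_or_odd k with he | ho
      · exact absurd he.two_dvd hkodd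
      · rcases ho with ⟨s, hs⟩
        rcases Int.even_or_odd c₁ with he | ho'
        · exact absurd he.two_dvd hc₁odd
        · rcases ho' with ⟨t, ht⟩
          refine ⟨1 + 2*s*t + s + t, ?_⟩
          rw [hM, hs, ht]
          push_cast
          ring
    have hr0 : redR ((2:ℕ):ℤ) M = 0 := by
      apply redR_eq_of hppos _ (by norm_num) (by norm_num)
      rw [Int.modEq_iff_dvd]
      push_cast
      simpa using h4
    rw [hr0]
    norm_num
  · have hρ1 : ρ = 1 := by
      rcases hρ with h | h
      · exfalso; rcases hodd with ⟨t, ht⟩; subst h; push_cast at hρu; omega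
      · exact h
    have hp3 : 3 ≤ (p:ℤ) := by
      rcases hodd with ⟨t, ht⟩
      have : 1 < p := hp1
      push_cast [ht]
      omega
    have hknd : ¬ (p:ℤ) ∣ k := by
      intro hdk
      have h1 : (p:ℤ) ∣ k * c₀ := hdk.mul_right _
      have h2 : (p:ℤ) ∣ u := by
        have := h1.sub hk
        simpa using this
      have h3 : (p:ℤ) ∣ 1 := by
        have h4 : (p:ℤ) ∣ 2*u := h2.mul_left 2
        rw [← hρu, hρ1] at h4
        have h5 := h4.add (dvd_refl (p:ℤ))
        simpa using h5
      have := Int.le_of_dvd one_pos h3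
      omega
    have hdvd2p : (2*(p:ℤ)) ∣ M - redR (p:ℤ) M := Int.ModEq.dvd hmod
    have hpMr : (p:ℤ) ∣ M - redR (p:ℤ) M := dvd_trans (dvd_mul_left _ _) hdvd2p
    have hndr : ¬ (p:ℤ) ∣ redR (p:ℤ) M := by
      intro hdr
      have hpM : (p:ℤ) ∣ M := by
        have := hpMr.add hdr
        simpa using this
      have hpK : (p:ℤ) ∣ 2*(k*c₁) := by
        have := hpM.sub (dvd_refl (p:ℤ))
        rw [hM] at this
        simpa using this
      rcases Int.Prime.dvd_mul' (by exact_mod_cast hp) hpK with h | h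
      · have := Int.le_of_dvd (by norm_num) h
        omega
      · rcases Int.Prime.dvd_mul' (by exact_mod_cast hp) h with h' | h'
        · exact hknd h'
        · exact hc₁ h'
    have hpar : (2:ℤ) ∣ redR (p:ℤ) M - (p:ℤ) := by
      have h1 : (2:ℤ) ∣ M - redR (p:ℤ) M := dvd_trans (dvd_mul_right 2 (p:ℤ)) hdvd2p
      have h2 : (2:ℤ) ∣ M - (p:ℤ) := by
        rw [hM]; simpa using (dvd_mul_right 2 (k*c₁))
      have := h2.sub h1
      simpa using this
    have hrne : redR (p:ℤ) M ≠ -(p:ℤ) := by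
      intro h
      exact hndr (by rw [h]; exact ⟨-1, by ring⟩)
    have hb1 : -((p:ℤ) - 2) ≤ redR (p:ℤ) M := by omega
    have hb2 : redR (p:ℤ) M ≤ (p:ℤ) - 2 := by omega
    exact sq_le_sq' hb1 hb2


lemma redR_eq_rho {p : ℕ} (hp2 : 2 ≤ p) {ρ u K M : ℤ} (hρ : ρ = 0 ∨ ρ = 1)
    (hρu : ρ - (p:ℤ) = 2*u) (hM : M = (p:ℤ) + 2*K) (hK : (p:ℤ) ∣ K - u) :
    redR (p:ℤ) M = ρ := by
  have hp2' : (2:ℤ) ≤ (p:ℤ) := by exact_mod_cast hp2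
  have hppos : (0:ℤ) < (p:ℤ) := by omega
  apply redR_eq_of hppos _ (by rcases hρ with h | h <;> omega)
    (by rcases hρ with h | h <;> omega)
  rw [Int.modEq_iff_dvd]
  rcases hK with ⟨s, hs⟩
  exact ⟨-s, by linear_combination hρu - 2*hs - hM⟩

/-- A sublattice of `ℤⁿ⁻¹ ⊕ ℤ(δ)` of index `p` is presented by an integer basis
matrix `B` with `|det B| = p`; its Gram matrix is `Q = Bᵀ G B` where
`G = diag(1,…,1,δ)`.  Either `L ≅ ℤⁿ⁻¹ ⊕ ℤ(p²δ)` or `L` has a characteristic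
covector of square `< n - 1`. -/
theorem stmt_8 (n : ℕ) (p : ℕ) (hp : p.Prime) (δ : ℕ) (hδ : 0 < δ)
    (B : Matrix (Fin n) (Fin n) ℤ) (hB : |B.det| = (p : ℤ))
    (Q : Matrix (Fin n) (Fin n) ℤ)
    (hQ : Q = Bᵀ * Matrix.diagonal (fun i : Fin n => if (i : ℕ) = n - 1 then (δ : ℤ) else 1) * B) :
    (∃ U : Matrix (Fin n) (Fin n) ℤ, IsUnit U.det ∧
        Uᵀ * Q * U =
          Matrix.diagonal (fun i : Fin n => if (i : ℕ) = n - 1 then ((p : ℤ) ^ 2 * δ) else 1)) ∨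
    (∃ ξ : Fin n → ℤ, IsCharVec Q ξ ∧ charSq Q ξ < (n : ℚ) - 1) := by
  rcases Nat.eq_zero_or_pos n with hn0 | hn
  · exfalso
    subst hn0
    have hd1 : B.det = 1 := Matrix.det_isEmpty
    rw [hd1] at hB
    have := hp.one_lt
    simp at hB
    omega
  set d : Fin n → ℤ := fun i => if (i:ℕ) = n - 1 then (δ:ℤ) else 1 with hd
  have hdpos : ∀ i, 0 < d i := by
    intro i
    simp only [hd]
    split
    · exact_mod_cast hδ
    · norm_num
  set lastI : Fin n := ⟨n-1, by omega⟩ with hlastI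
  have hlastv : (lastI:ℕ) = n - 1 := rfl
  have hppos : 0 < p := hp.pos
  have hpposZ : (0:ℤ) < (p:ℤ) := by exact_mod_cast hppos
  have hpq0 : ((p:ℚ)) ≠ 0 := by exact_mod_cast hppos.ne'
  have hp2 : 2 ≤ p := hp.two_le
  have hpq2 : (2:ℚ) ≤ (p:ℚ) := by exact_mod_cast hp2
  obtain ⟨ρ, u, hρ, hρu⟩ : ∃ ρ u : ℤ, (ρ = 0 ∨ ρ = 1) ∧ ρ - (p:ℤ) = 2*u := by
    rcases hp.eq_two_or_odd' with h2 | hodd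
    · exact ⟨0, -1, Or.inl rfl, by rw [h2]; push_cast; try ring⟩
    · rcases hodd with ⟨t, ht⟩
      exact ⟨1, -t, Or.inr rfl, by rw [ht]; push_cast; try ring⟩
  have hρsq : (ρ:ℚ)^2 ≤ 1 := by rcases hρ with h | h <;> rw [h] <;> norm_num
  by_cases hA1 : ∀ (j i : Fin n), (i:ℕ) ≠ n - 1 → (p:ℤ) ∣ (Bᵀ).adjugate i j
  · -- Case A: only the last row of adj survives mod p : first disjunct
    left
    have hnot := adj_not_all_dvd hn hp hB
    push_neg at hnot
    obtain ⟨i, j, hij⟩ := hnot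
    have hival : (i:ℕ) = n - 1 := by
      by_contra h
      exact hij (hA1 j i h)
    have hieq : i = lastI := Fin.ext (by rw [hival])
    rw [hieq] at hij
    have hrow : ∀ jj, (p:ℤ) ∣ B lastI jj :=
      row_dvd_of_adj hp hB hij
        (fun jj kk hkk => hA1 jj kk (fun hv => hkk (Fin.ext hv)))
    obtain ⟨U, hU1, hU2⟩ := first_disj hn hppos B hB lastI (Or.inr hlastv) hrow
    exact ⟨U, hU1, by rw [hQ]; exact hU2⟩
  · push_neg at hA1
    obtain ⟨j₀, i₀, hi₀v, hc₀⟩ := hA1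
    have hi₀last : i₀ ≠ lastI := fun h => hi₀v (by rw [h])
    have hdi₀ : d i₀ = 1 := by simp only [hd]; exact if_neg hi₀v
    by_cases hδ1 : δ = 1
    · -- δ = 1
      have hdall : ∀ i, d i = 1 := by
        intro i
        simp only [hd, hδ1]
        split <;> norm_num
      by_cases hrow : ∀ (j i : Fin n), i ≠ i₀ → (p:ℤ) ∣ (Bᵀ).adjugate i j
      · -- first disjunct via permutation
        left
        have hrowB : ∀ jj, (p:ℤ) ∣ B i₀ jj := row_dvd_of_adj hp hB hc₀ hrow
        obtain ⟨U, hU1, hU2⟩ := first_disj hn hppos B hB i₀ (Or.inl hδ1) hrowB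
        exact ⟨U, hU1, by rw [hQ]; exact hU2⟩
      · push_neg at hrow
        obtain ⟨j₁, i₁, hi₁, hc₁⟩ := hrow
        right
        by_cases hci : (p:ℤ) ∣ (Bᵀ).adjugate i₁ j₀
        · -- two-column case : both special residues equal ρ
          obtain ⟨k', hk'⟩ := solve_cong hp hc₁ u
          obtain ⟨k, hk⟩ := solve_cong hp hc₀ (u - k' * (Bᵀ).adjugate i₀ j₁)
          obtain ⟨ξ, hchar, hval⟩ := key_char hppos hδ B hB d hdpos k k' j₀ j₁
          refine ⟨ξ, by rw [hQ]; exact hchar, ?_⟩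
          rw [hQ, hval]
          have hr0 : redR (p:ℤ) ((p:ℤ) * d i₀ + 2*(k * (Bᵀ).adjugate i₀ j₀ + k' * (Bᵀ).adjugate i₀ j₁)) = ρ := by
            refine redR_eq_rho (K := k * (Bᵀ).adjugate i₀ j₀ + k' * (Bᵀ).adjugate i₀ j₁)
              hp2 hρ hρu (by rw [hdi₀]; ring) ?_
            have h : k * (Bᵀ).adjugate i₀ j₀ + k' * (Bᵀ).adjugate i₀ j₁ - u
                = k * (Bᵀ).adjugate i₀ j₀ - (u - k' * (Bᵀ).adjugate i₀ j₁) := by ring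
            rw [h]; exact hk
          have hr1 : redR (p:ℤ) ((p:ℤ) * d i₁ + 2*(k * (Bᵀ).adjugate i₁ j₀ + k' * (Bᵀ).adjugate i₁ j₁)) = ρ := by
            refine redR_eq_rho (K := k * (Bᵀ).adjugate i₁ j₀ + k' * (Bᵀ).adjugate i₁ j₁)
              hp2 hρ hρu (by rw [hdall i₁]; ring) ?_
            have h : k * (Bᵀ).adjugate i₁ j₀ + k' * (Bᵀ).adjugate i₁ j₁ - u
                = k * (Bᵀ).adjugate i₁ j₀ + (k' * (Bᵀ).adjugate i₁ j₁ - u) := by ring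
            rw [h]
            exact dvd_add (hci.mul_left k) hk'
          refine lt_of_le_of_lt
            (sum_bound hppos hdpos
              (fun i => redR (p:ℤ) ((p:ℤ) * d i + 2*(k * (Bᵀ).adjugate i j₀ + k' * (Bᵀ).adjugate i j₁)))
              (fun i => redR_mem hpposZ _) (Ne.symm hi₁)
              (a := 1/(p:ℚ)^2) (b := 1/(p:ℚ)^2) ?_ ?_) ?_
          · beta_reduce
            rw [hr0, hdi₀]
            push_cast
            rw [mul_one, div_le_div_iff₀ (by positivity) (by positivity)]
            nlinarith [hρsq, sq_nonneg ((p:ℚ))]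
          · beta_reduce
            rw [hr1, hdall i₁]
            push_cast
            rw [mul_one, div_le_div_iff₀ (by positivity) (by positivity)]
            nlinarith [hρsq, sq_nonneg ((p:ℚ))]
          · have h1 : (1:ℚ)/(p:ℚ)^2 + 1/(p:ℚ)^2 < 1 := by
              rw [← add_div, div_lt_one (by positivity)]
              nlinarith
            linarith
        · -- single-column case : second residue bounded by (p-2)²
          obtain ⟨k, hk⟩ := solve_cong hp hc₀ u
          obtain ⟨ξ, hchar, hval⟩ := key_char hppos hδ B hB d hdpos k 0 j₀ j₀
          refine ⟨ξ, by rw [hQ]; exact hchar, ?_⟩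
          rw [hQ, hval]
          have hr0 : redR (p:ℤ) ((p:ℤ) * d i₀ + 2*(k * (Bᵀ).adjugate i₀ j₀ + 0 * (Bᵀ).adjugate i₀ j₀)) = ρ := by
            refine redR_eq_rho (K := k * (Bᵀ).adjugate i₀ j₀ + 0 * (Bᵀ).adjugate i₀ j₀)
              hp2 hρ hρu (by rw [hdi₀]; ring) ?_
            have h : k * (Bᵀ).adjugate i₀ j₀ + 0 * (Bᵀ).adjugate i₀ j₀ - u
                = k * (Bᵀ).adjugate i₀ j₀ - u := by ring
            rw [h]; exact hk
          have hM1 : (p:ℤ) * d i₁ + 2*(k * (Bᵀ).adjugate i₁ j₀ + 0 * (Bᵀ).adjugate i₁ j₀)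
              = (p:ℤ) + 2*(k * (Bᵀ).adjugate i₁ j₀) := by rw [hdall i₁]; ring
          have hr1sq : (redR (p:ℤ) ((p:ℤ) * d i₁ + 2*(k * (Bᵀ).adjugate i₁ j₀ + 0 * (Bᵀ).adjugate i₁ j₀)))^2
              ≤ ((p:ℤ) - 2)^2 := by
            rw [hM1]
            exact second_bound hp hρu hρ hc₀ hci hk
          refine lt_of_le_of_lt
            (sum_bound hppos hdpos
              (fun i => redR (p:ℤ) ((p:ℤ) * d i + 2*(k * (Bᵀ).adjugate i j₀ + 0 * (Bᵀ).adjugate i j₀)))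
              (fun i => redR_mem hpposZ _) (Ne.symm hi₁)
              (a := 1/(p:ℚ)^2) (b := ((p:ℚ)-2)^2/(p:ℚ)^2) ?_ ?_) ?_
          · beta_reduce
            rw [hr0, hdi₀]
            push_cast
            rw [mul_one, div_le_div_iff₀ (by positivity) (by positivity)]
            nlinarith [hρsq, sq_nonneg ((p:ℚ))]
          · beta_reduce
            rw [hM1, hdall i₁]
            have hsqq : ((redR (p:ℤ) ((p:ℤ) + 2*(k * (Bᵀ).adjugate i₁ j₀)) : ℚ))^2 ≤ ((p:ℚ)-2)^2 := by
              have h' : (((p:ℤ) - 2 : ℤ) : ℚ) = (p:ℚ) - 2 := by push_cast; ring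
              rw [← h']
              have hr1sq' := hr1sq
              rw [hM1] at hr1sq'
              exact_mod_cast hr1sq'
            push_cast
            rw [mul_one, div_le_div_iff₀ (by positivity) (by positivity)]
            nlinarith [hsqq, sq_nonneg ((p:ℚ))]
          · have h1 : (1:ℚ)/(p:ℚ)^2 + ((p:ℚ)-2)^2/(p:ℚ)^2 < 1 := by
              rw [← add_div, div_lt_one (by positivity)]
              nlinarith
            linarith
    · -- δ ≥ 2
      right
      have hδ2 : 2 ≤ δ := by omega
      have hδq2 : (2:ℚ) ≤ (δ:ℚ) := by exact_mod_cast hδ2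
      obtain ⟨k, hk⟩ := solve_cong hp hc₀ u
      obtain ⟨ξ, hchar, hval⟩ := key_char hppos hδ B hB d hdpos k 0 j₀ j₀
      refine ⟨ξ, by rw [hQ]; exact hchar, ?_⟩
      rw [hQ, hval]
      have hr0 : redR (p:ℤ) ((p:ℤ) * d i₀ + 2*(k * (Bᵀ).adjugate i₀ j₀ + 0 * (Bᵀ).adjugate i₀ j₀)) = ρ := by
        refine redR_eq_rho (K := k * (Bᵀ).adjugate i₀ j₀ + 0 * (Bᵀ).adjugate i₀ j₀)
            hp2 hρ hρu (by rw [hdi₀]; ring) ?_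
        have h : k * (Bᵀ).adjugate i₀ j₀ + 0 * (Bᵀ).adjugate i₀ j₀ - u
            = k * (Bᵀ).adjugate i₀ j₀ - u := by ring
        rw [h]; exact hk
      have hdl : d lastI = (δ:ℤ) := by simp [hd, hlastv]
      refine lt_of_le_of_lt
        (sum_bound hppos hdpos
          (fun i => redR (p:ℤ) ((p:ℤ) * d i + 2*(k * (Bᵀ).adjugate i j₀ + 0 * (Bᵀ).adjugate i j₀)))
          (fun i => redR_mem hpposZ _) hi₀last
          (a := 1/(p:ℚ)^2) (b := 1/(δ:ℚ)) ?_ ?_) ?_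
      · beta_reduce
        rw [hr0, hdi₀]
        push_cast
        rw [mul_one, div_le_div_iff₀ (by positivity) (by positivity)]
        nlinarith [hρsq, sq_nonneg ((p:ℚ))]
      · beta_reduce
        have hmem := redR_mem hpposZ ((p:ℤ) * d lastI + 2*(k * (Bᵀ).adjugate lastI j₀ + 0 * (Bᵀ).adjugate lastI j₀))
        have hsq : (redR (p:ℤ) ((p:ℤ) * d lastI + 2*(k * (Bᵀ).adjugate lastI j₀ + 0 * (Bᵀ).adjugate lastI j₀)))^2 ≤ (p:ℤ)^2 :=
          sq_le_sq' (by omega) (by omega)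
        have hsqq : ((redR (p:ℤ) ((p:ℤ) * d lastI + 2*(k * (Bᵀ).adjugate lastI j₀ + 0 * (Bᵀ).adjugate lastI j₀)) : ℚ))^2 ≤ (p:ℚ)^2 := by
          exact_mod_cast hsq
        have hdlq : ((d lastI : ℤ) : ℚ) = (δ:ℚ) := by rw [hdl]; push_cast; ring
        rw [hdlq, div_le_div_iff₀ (by positivity) (by positivity)]
        nlinarith [hsqq, hδq2]
      · have h1 : (1:ℚ)/(p:ℚ)^2 ≤ 1/4 := by
          rw [div_le_div_iff₀ (by positivity) (by norm_num)]
          nlinarith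
        have h2 : (1:ℚ)/(δ:ℚ) ≤ 1/2 := by
          rw [div_le_div_iff₀ (by positivity) (by norm_num)]
          linarith
        linarith
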